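/- (Correctness of the derandomized algorithm) Let P and Q be finite posets with k = |P|, let n = |Q|, fix a bijection between {1, ..., n} and the elements of Q, and let 𝓕 be an (n, 2^k·k, 2^k·k)-splitter. If P ⪯ Q, then there exist a function f ∈ 𝓕 and a function h : {1, ..., 2^k·k} → P such that the composition h ∘ f (viewed via the fixed bijection as a function from the elements of Q to the elements of P) is a witness for P ⪯ Q. -/

import Mathlib

/-- A chain in a poset: a finite sequence `(v_1, …, v_n)` with `v_i < v_j` for `i < j`,
modeled as a strictly increasing list. -/
def IsPosetChain {α : Type*} [PartialOrder α] (l : List α) : Prop :=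
  l.Chain' (· < ·)

/-- A partial function `f : Q ⇀ P` (modeled as `Q → Option P`) is a witness for `P ⪯ Q`:
for every chain `(c_1, …, c_n)` in `P` there is a chain `(c'_1, …, c'_n)` in `Q`
with `f (c'_i) = c_i` for all `i`. -/
def IsChainMinorWitness {P Q : Type*} [PartialOrder P] [PartialOrder Q]
    (f : Q → Option P) : Prop :=
  ∀ c : List P, IsPosetChain c →
    ∃ c' : List Q, IsPosetChain c' ∧ c'.map f = c.map some

/-- `P` is a chain minor of `Q` if there is a witness. -/
def ChainMinor (P Q : Type*) [PartialOrder P] [PartialOrder Q] : Prop :=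
  ∃ f : Q → Option P, IsChainMinorWitness f

/-- A total function `g : Q → P` is a witness for `P ⪯ Q`: for every chain
`(c_1, …, c_n)` in `P` there is a chain `(c'_1, …, c'_n)` in `Q` with
`g (c'_i) = c_i` for all `i`. -/
def IsTotalChainMinorWitness {P Q : Type*} [PartialOrder P] [PartialOrder Q]
    (g : Q → P) : Prop :=
  ∀ c : List P, IsPosetChain c →
    ∃ c' : List Q, IsPosetChain c' ∧ c'.map g = c

/-- An `(n, m, l)`-splitter: a family `F` of functions `{1, …, n} → {1, …, m}` such that
for every subset `W` of `{1, …, n}` with `|W| ≤ l` some `f ∈ F` is injective on `W`. -/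
def IsSplitter (n m l : ℕ) (F : Set (Fin n → Fin m)) : Prop :=
  ∀ W : Finset (Fin n), W.card ≤ l → ∃ f ∈ F, Set.InjOn f ↑W

/-- A poset chain has no duplicates. -/
lemma IsPosetChain.nodup' {α : Type*} [PartialOrder α] [DecidableEq α] {l : List α}
    (h : IsPosetChain l) : l.Nodup :=
  (List.isChain_iff_pairwise.mp h).imp ne_of_lt

/-- A poset chain is determined by its underlying finset. -/
lemma posetChain_eq_of_toFinset_eq {α : Type*} [PartialOrder α] [DecidableEq α]
    {l₁ l₂ : List α} (h₁ : IsPosetChain l₁) (h₂ : IsPosetChain l₂)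
    (h : l₁.toFinset = l₂.toFinset) : l₁ = l₂ := by
  have p₁ := List.isChain_iff_pairwise.mp h₁
  have p₂ := List.isChain_iff_pairwise.mp h₂
  exact List.Perm.eq_of_pairwise (fun _ _ _ _ h1 h2 => (lt_asymm h1 h2).elim) p₁ p₂
    (List.perm_of_nodup_nodup_toFinset_eq h₁.nodup' h₂.nodup' h)

/-- Correctness of the derandomized algorithm: if `k = |P|`, `n = |Q|`, a bijection
between `{1, …, n}` and the elements of `Q` is fixed, `F` is an
`(n, 2^k·k, 2^k·k)`-splitter, and `P ⪯ Q`, then there are `f ∈ F` and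
`h : {1, …, 2^k·k} → P` whose composition (viewed, via the bijection, as a function
from the elements of `Q` to the elements of `P`) is a witness for `P ⪯ Q`. -/
theorem splitter_correctness {P Q : Type*} [Fintype P] [PartialOrder P]
    [Fintype Q] [PartialOrder Q] (k n : ℕ)
    (hk : k = Fintype.card P) (hn : n = Fintype.card Q) (e : Fin n ≃ Q)
    (F : Set (Fin n → Fin (2 ^ k * k))) (hF : IsSplitter n (2 ^ k * k) (2 ^ k * k) F)
    (h : ChainMinor P Q) :
    ∃ f ∈ F, ∃ g : Fin (2 ^ k * k) → P,
      IsTotalChainMinorWitness (fun q : Q => g (f (e.symm q))) := by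
  classical
  obtain ⟨fw, hfw⟩ := h
  rcases isEmpty_or_nonempty P with hP | hP
  · -- P is empty: every chain in P is empty, trivial witness
    have hk0 : k = 0 := by rw [hk]; exact Fintype.card_eq_zero
    subst hk0
    obtain ⟨f, hfF, -⟩ := hF ∅ (by simp)
    refine ⟨f, hfF, fun y => Fin.elim0 (Fin.cast (by norm_num) y), ?_⟩
    intro c hc
    match c with
    | [] => exact ⟨[], List.isChain_nil, rfl⟩
    | a :: _ => exact (IsEmpty.false a).elim
  · -- P is nonempty
    set d : P := Classical.arbitrary P with hd
    -- chosen witness chain in Q for every chain in P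
    set w : List P → List Q := fun c =>
      if hc : IsPosetChain c then (hfw c hc).choose else [] with hwdef
    have hw : ∀ c, (hc : IsPosetChain c) →
        IsPosetChain (w c) ∧ (w c).map fw = c.map some := by
      intro c hc
      simp only [hwdef, dif_pos hc]
      exact (hfw c hc).choose_spec
    -- the set of chains in P is finite
    have hfin : {c : List P | IsPosetChain c}.Finite := by
      apply Set.Finite.of_finite_image (f := List.toFinset) (Set.toFinite _)
      intro a ha b hb hab
      exact posetChain_eq_of_toFinset_eq ha hb hab
    set CF : Finset (List P) := hfin.toFinset with hCF
    set W : Finset (Fin n) :=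
      CF.biUnion (fun c => ((w c).map e.symm).toFinset) with hW
    -- cardinality bound
    have hlen : ∀ c ∈ CF, ((w c).map e.symm).toFinset.card ≤ k := by
      intro c hc
      have hcchain : IsPosetChain c := (hfin.mem_toFinset).mp hc
      have hlen1 : (w c).length = c.length := by
        have := congrArg List.length (hw c hcchain).2
        simpa using this
      calc ((w c).map e.symm).toFinset.card ≤ ((w c).map e.symm).length :=
            List.toFinset_card_le _
        _ = c.length := by rw [List.length_map, hlen1]
        _ ≤ Fintype.card P := hcchain.nodup'.length_le_card
        _ = k := hk.symm
    have hCFcard : CF.card ≤ 2 ^ k := by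
      have h1 : CF.card ≤ Fintype.card (Finset P) := by
        apply Finset.card_le_card_of_injOn List.toFinset (fun _ _ => Finset.mem_univ _)
        intro a ha b hb hab
        exact posetChain_eq_of_toFinset_eq ((hfin.mem_toFinset).mp ha)
          ((hfin.mem_toFinset).mp hb) hab
      rwa [Fintype.card_finset, ← hk] at h1
    have hWcard : W.card ≤ 2 ^ k * k := by
      calc W.card ≤ ∑ c ∈ CF, ((w c).map e.symm).toFinset.card :=
            Finset.card_biUnion_le
        _ ≤ ∑ _c ∈ CF, k := Finset.sum_le_sum hlen
        _ = CF.card * k := by rw [Finset.sum_const, smul_eq_mul]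
        _ ≤ 2 ^ k * k := Nat.mul_le_mul_right k hCFcard
    obtain ⟨f, hfF, hfinj⟩ := hF W hWcard
    -- define g
    refine ⟨f, hfF, fun y =>
      if hy : ∃ x ∈ W, f x = y then (fw (e hy.choose)).getD d else d, ?_⟩
    intro c hc
    obtain ⟨hc', hmap⟩ := hw c hc
    refine ⟨w c, hc', ?_⟩
    have hmem : ∀ q ∈ w c, e.symm q ∈ W := by
      intro q hq
      refine Finset.mem_biUnion.mpr ⟨c, (hfin.mem_toFinset).mpr hc, ?_⟩
      rw [List.mem_toFinset, List.mem_map]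
      exact ⟨q, hq, rfl⟩
    have step : ∀ q ∈ w c,
        (if hy : ∃ x ∈ W, f x = f (e.symm q) then (fw (e hy.choose)).getD d else d)
          = (fw q).getD d := by
      intro q hq
      have hx : e.symm q ∈ W := hmem q hq
      have hy : ∃ x ∈ W, f x = f (e.symm q) := ⟨e.symm q, hx, rfl⟩
      rw [dif_pos hy]
      have hspec := hy.choose_spec
      have hxeq : hy.choose = e.symm q := hfinj hspec.1 hx hspec.2
      rw [hxeq, Equiv.apply_symm_apply]
    calc (w c).map (fun q =>
          if hy : ∃ x ∈ W, f x = f (e.symm q) then (fw (e hy.choose)).getD d else d)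
          = (w c).map (fun q => (fw q).getD d) := List.map_congr_left step
      _ = ((w c).map fw).map (fun o => o.getD d) := by rw [List.map_map]; rfl
      _ = (c.map some).map (fun o => o.getD d) := by rw [hmap]
      _ = c := by simp [Function.comp_def]
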